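/- arXiv:math/0003115 — 4 statements merged into one kernel-verified Lean document; each statement's English description precedes it below -/
import Mathlib

section
/- If $C$ is a club subset of $\omega_1$, $\gamma < \omega_1$, and $A \subseteq \omega_1$ has order type $\mathrm{otp}(A) < \omega^{\gamma}$, then there exists $\beta \in C$ such that $\sup(A \cap \beta) < \beta$. -/
open Ordinal

/-- The first uncountable ordinal. -/
noncomputable def omega1 : Ordinal.{0} := (Cardinal.aleph 1).ord

/-- The order type of a set of ordinals. -/
noncomputable def otp (A : Set Ordinal.{0}) : Ordinal.{1} :=
  Ordinal.type (Subrel ((· < ·) : Ordinal.{0} → Ordinal.{0} → Prop) (· ∈ A))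

/-- `C` is a club (closed unbounded) subset of `θ`. -/
def IsClubIn (C : Set Ordinal.{0}) (θ : Ordinal.{0}) : Prop :=
  C ⊆ Set.Iio θ ∧
  (∀ δ < θ, Order.IsSuccLimit δ → (∀ α < δ, ∃ β ∈ C, α < β ∧ β < δ) → δ ∈ C) ∧
  (∀ α < θ, ∃ β ∈ C, α ≤ β)

/-- If `C` is a club subset of `ω₁`, `γ < ω₁`, and `A ⊆ ω₁` has order type
`otp(A) < ω ^ γ`, then there exists `β ∈ C` such that `sup(A ∩ β) < β`. -/
theorem stmt0 (C A : Set Ordinal.{0}) (γ : Ordinal.{0})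
    (hC : IsClubIn C omega1) (hγ : γ < omega1)
    (hA : A ⊆ Set.Iio omega1)
    (hotp : otp A < Ordinal.lift.{1} (Ordinal.omega0 ^ γ)) :
    ∃ β ∈ C, sSup (A ∩ Set.Iio β) < β := by
  -- ω ^ γ < ω₁
  have hcof : omega1.cof = Cardinal.aleph 1 := Cardinal.isRegular_aleph_one.cof_eq
  have hopow : ∀ δ < omega1, Ordinal.omega0 ^ δ < omega1 := by
    intro δ
    induction δ using Ordinal.limitRecOn with
    | zero =>
      intro _
      rw [Ordinal.opow_zero, omega1, Cardinal.lt_ord, Ordinal.card_one]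
      exact Cardinal.one_lt_aleph0.trans_le (Cardinal.aleph0_le_aleph 1)
    | add_one δ ih =>
      intro hδ
      have hδ' : δ < omega1 := (lt_add_one δ).trans hδ
      have h1 := ih hδ'
      rw [Ordinal.opow_add_one, omega1, Cardinal.lt_ord, Ordinal.card_mul]
      have h1' : (Ordinal.omega0 ^ δ).card < Cardinal.aleph 1 := by
        rwa [omega1, Cardinal.lt_ord] at h1
      have h2 : Ordinal.omega0.card = Cardinal.aleph0 := Ordinal.card_omega0
      rw [h2]
      have h1'' : (Ordinal.omega0 ^ δ).card ≤ Cardinal.aleph0 :=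
        (Cardinal.succ_aleph0 ▸ Order.lt_succ_iff).mp h1'
      calc (Ordinal.omega0 ^ δ).card * Cardinal.aleph0
          ≤ Cardinal.aleph0 * Cardinal.aleph0 := mul_le_mul' h1'' le_rfl
        _ = Cardinal.aleph0 := Cardinal.aleph0_mul_aleph0
        _ < Cardinal.aleph 1 := Cardinal.aleph0_lt_aleph_one
    | limit δ hlim ih =>
      intro hδ
      rw [← Ordinal.IsNormal.bsup_eq (Ordinal.isNormal_opow Ordinal.one_lt_omega0) hlim]
      apply Ordinal.bsup_lt_ord (c := omega1)
      · rw [hcof]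
        rw [omega1] at hδ
        exact Cardinal.lt_ord.mp hδ
      · intro i hi
        exact ih i hi (hi.trans hδ)
  have hωγ : Ordinal.omega0 ^ γ < omega1 := hopow γ hγ
  -- A is countable
  have hcard : (Cardinal.mk A : Cardinal.{1}) ≤ Cardinal.aleph0 := by
    have h1 : (otp A).card ≤ (Ordinal.lift.{1} (Ordinal.omega0 ^ γ)).card :=
      Ordinal.card_le_card hotp.le
    rw [← Ordinal.lift_card] at h1
    have h2 : (Ordinal.omega0 ^ γ).card ≤ Cardinal.aleph0 := by
      rw [omega1, Cardinal.lt_ord] at hωγ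
      exact (Cardinal.succ_aleph0 ▸ Order.lt_succ_iff).mp hωγ
    have h3 : (otp A).card = Cardinal.mk A := by unfold otp; exact Ordinal.card_type _
    calc (Cardinal.mk A : Cardinal.{1}) = (otp A).card := h3.symm
      _ ≤ Cardinal.lift.{1} (Ordinal.omega0 ^ γ).card := h1
      _ ≤ Cardinal.lift.{1} Cardinal.aleph0 := Cardinal.lift_le.mpr h2
      _ = Cardinal.aleph0 := Cardinal.lift_aleph0
  have hAc : A.Countable := Cardinal.le_aleph0_iff_set_countable.mp hcard
  -- sSup A < ω₁
  have hbdd : BddAbove A := ⟨omega1, fun a ha => (hA ha).le⟩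
  have hsup : sSup A < omega1 := by
    rcases A.eq_empty_or_nonempty with h | h
    · rw [h, csSup_empty]
      exact (Cardinal.isSuccLimit_ord (Cardinal.aleph0_le_aleph 1)).bot_lt
    · obtain ⟨f, hf⟩ := hAc.exists_eq_range h
      rw [hf]
      show (⨆ n, f n) < omega1
      apply Ordinal.iSup_lt_ord
      · rw [hcof, Cardinal.mk_nat]
        exact Cardinal.aleph0_lt_aleph_one
      · intro n
        exact hA (hf ▸ Set.mem_range_self n)
  -- get β ∈ C beyond sSup A
  have hsucc : sSup A + 1 < omega1 := by
    have hlim : Order.IsSuccLimit omega1 := Cardinal.isSuccLimit_ord (Cardinal.aleph0_le_aleph 1)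
    rw [Ordinal.add_one_eq_succ]
    exact hlim.succ_lt hsup
  obtain ⟨β, hβC, hβ⟩ := hC.2.2 (sSup A + 1) hsucc
  refine ⟨β, hβC, ?_⟩
  calc sSup (A ∩ Set.Iio β) ≤ sSup A := csSup_le_csSup' hbdd Set.inter_subset_left
    _ < sSup A + 1 := lt_add_one _
    _ ≤ β := hβ
end

section
/- Let $\bar C = \langle C_\delta : \delta < \omega_1 \text{ limit} \rangle$ with each $C_\delta$ an unbounded subset of $\delta$, and let $Q_{\bar C}$ be the set of all bounded sets $c$ that are closed subsets of some ordinal $\alpha < \omega_1$ such that for every limit ordinal $\delta \le \alpha$, if $\delta = \sup(c \cap \delta)$ then $c \cap C_\delta$ is bounded in $\delta$; order $Q_{\bar C}$ by end-extension. Then for each $\alpha < \omega_1$, the set $\mathcal{I}^*_\alpha = \{ p \in Q_{\bar C} : \exists \beta \in p,\ \beta \ge \alpha \}$ is dense in $Q_{\bar C}$. -/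
open Ordinal

/-- The club-shooting forcing `Q_{\bar C}`: conditions are sets `c` that are
closed bounded subsets of some `α < ω₁` such that for every limit `δ ≤ α`,
if `δ = sup(c ∩ δ)` then `c ∩ C_δ` is bounded in `δ`. -/
def QbarC (Cbar : Ordinal.{0} → Set Ordinal.{0}) : Set (Set Ordinal.{0}) :=
  {c | ∃ α < omega1, c ⊆ Set.Iio α ∧
    (∀ δ < α, Order.IsSuccLimit δ → sSup (c ∩ Set.Iio δ) = δ → δ ∈ c) ∧
    (∀ δ ≤ α, Order.IsSuccLimit δ → sSup (c ∩ Set.Iio δ) = δ → sSup (c ∩ Cbar δ) < δ)}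

/-- `c₁` is an initial segment of `c₂` (end-extension ordering). -/
def EndExt (c₁ c₂ : Set Ordinal.{0}) : Prop :=
  c₁ ⊆ c₂ ∧ ∀ y ∈ c₂, ∀ x ∈ c₁, y ≤ x → y ∈ c₁

/-- For each `α < ω₁`, the set `𝓘*_α = {p ∈ Q_{\bar C} : ∃ β ∈ p, β ≥ α}`
is dense in `Q_{\bar C}` (with the end-extension ordering). -/
theorem stmt3 (Cbar : Ordinal.{0} → Set Ordinal.{0})
    (hCbar : ∀ δ, δ < omega1 → Order.IsSuccLimit δ →
      Cbar δ ⊆ Set.Iio δ ∧ ∀ β < δ, ∃ γ ∈ Cbar δ, β < γ)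
    (α : Ordinal.{0}) (hα : α < omega1)
    (p : Set Ordinal.{0}) (hp : p ∈ QbarC Cbar) :
    ∃ q ∈ QbarC Cbar, EndExt p q ∧ ∃ β ∈ q, α ≤ β := by
  obtain ⟨α₀, hα₀, hsub, hclosed, hbd⟩ := hp
  set β : Ordinal.{0} := max α α₀ with hβdef
  have hα₀β : α₀ ≤ β := le_max_right _ _
  have hβ : β < omega1 := max_lt hα hα₀
  have hω : Order.IsSuccLimit omega1 := Cardinal.isSuccLimit_ord (Cardinal.aleph0_le_aleph 1)
  have hββ1 : β < β + 1 := by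
    rw [Ordinal.add_one_eq_succ]; exact Order.lt_succ β
  have hβ1 : β + 1 < omega1 := by
    rw [Ordinal.add_one_eq_succ]
    exact hω.succ_lt hβ
  set q : Set Ordinal.{0} := p ∪ {α₀, β} with hqdef
  -- For δ ≤ α₀ the new points don't affect the part below δ.
  have hseg : ∀ δ ≤ α₀, q ∩ Set.Iio δ = p ∩ Set.Iio δ := by
    intro δ hδ
    ext x
    constructor
    · rintro ⟨(hx | hx | hx), hx'⟩
      · exact ⟨hx, hx'⟩
      · subst hx; exact absurd hx' (not_lt.2 hδ)
      · rw [Set.mem_singleton_iff] at hx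
        subst hx; exact absurd hx' (not_lt.2 (hδ.trans hα₀β))
    · rintro ⟨hx, hx'⟩; exact ⟨Or.inl hx, hx'⟩
  -- If α₀ < δ ≤ β then the sup hypothesis is vacuous.
  have hvac : ∀ δ, α₀ < δ → δ ≤ β → sSup (q ∩ Set.Iio δ) ≠ δ := by
    intro δ hδ hδβ hsup
    have hub : sSup (q ∩ Set.Iio δ) ≤ α₀ := by
      apply csSup_le'
      rintro x ⟨(hx | hx | hx), hx'⟩
      · exact le_of_lt (hsub hx)
      · exact le_of_eq hx
      · rw [Set.mem_singleton_iff] at hx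
        subst hx
        exact absurd hx' (not_lt.2 hδβ)
    rw [hsup] at hub
    exact absurd hδ (not_lt.2 hub)
  -- Any limit δ ≤ β + 1 satisfies δ ≤ β.
  have hlim_le : ∀ δ ≤ β + 1, Order.IsSuccLimit δ → δ ≤ β := by
    intro δ hδ hδlim
    rcases lt_or_eq_of_le hδ with h | h
    · rw [Ordinal.add_one_eq_succ] at h
      exact Order.lt_succ_iff.mp h
    · exfalso
      rw [h, Ordinal.add_one_eq_succ] at hδlim
      exact (Order.not_isSuccPrelimit_succ _) hδlim.isSuccPrelimit
  refine ⟨q, ⟨β + 1, hβ1, ?_, ?_, ?_⟩, ⟨?_, ?_⟩, β, Or.inr (Or.inr rfl), le_max_left _ _⟩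
  · -- q ⊆ Iio (β+1)
    rintro x (hx | hx | hx)
    · exact (hsub hx).trans (lt_of_le_of_lt hα₀β hββ1)
    · subst hx; exact lt_of_le_of_lt hα₀β hββ1
    · rw [Set.mem_singleton_iff] at hx; subst hx; exact hββ1
  · -- closedness
    intro δ hδ hδlim hsup
    have hδβ : δ ≤ β := by
      rw [Ordinal.add_one_eq_succ] at hδ
      exact Order.lt_succ_iff.mp hδ
    rcases le_or_gt δ α₀ with h | h
    · rcases lt_or_eq_of_le h with h' | h'
      · rw [hseg δ h] at hsup
        exact Or.inl (hclosed δ h' hδlim hsup)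
      · exact Or.inr (Or.inl h')
    · exact absurd hsup (hvac δ h hδβ)
  · -- boundedness at limits
    intro δ hδ hδlim hsup
    have hδβ : δ ≤ β := hlim_le δ hδ hδlim
    rcases le_or_gt δ α₀ with h | h
    · have hC : Cbar δ ⊆ Set.Iio δ :=
        (hCbar δ (lt_of_le_of_lt hδβ hβ) hδlim).1
      have hqC : q ∩ Cbar δ = p ∩ Cbar δ := by
        ext x
        constructor
        · rintro ⟨(hx | hx | hx), hx'⟩
          · exact ⟨hx, hx'⟩
          · subst hx; exact absurd (hC hx') (not_lt.2 h)
          · rw [Set.mem_singleton_iff] at hx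
            subst hx; exact absurd (hC hx') (not_lt.2 (h.trans hα₀β))
        · rintro ⟨hx, hx'⟩; exact ⟨Or.inl hx, hx'⟩
      rw [hseg δ h] at hsup
      rw [hqC]
      exact hbd δ h hδlim hsup
    · exact absurd hsup (hvac δ h hδβ)
  · -- p ⊆ q
    exact Set.subset_union_left
  · -- initial segment
    rintro y (hy | hy | hy) x hx hyx
    · exact hy
    · subst hy; exact absurd (hsub hx) (not_lt.2 hyx)
    · rw [Set.mem_singleton_iff] at hy
      subst hy
      exact absurd (lt_of_lt_of_le (hsub hx) hα₀β) (not_lt.2 hyx)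
end

section
/- Suppose $\langle p_n : n < \omega \rangle$ is an increasing sequence in $Q_{\bar C}$ (end-extensions), $\delta = \sup_n \sup(p_n)$ is a limit ordinal, and for every $n$ the set $(p_{n+1} \cup \{\sup p_{n+1}\}) \setminus (p_n \cup \{\sup p_n\})$ is disjoint from $C_\delta$, and moreover for every limit $\delta' < \delta$ there is $n$ with $\sup(p_n) > \delta'$. Then $q = \bigcup_n p_n$ together with the requirement at $\delta$ satisfies: $q$ is a closed subset of $\delta$, $\sup(q) = \delta$ or $q$ bounded, and $q \cap C_\delta \subseteq p_0 \cup \{\sup p_0\}$, so in particular $q \cap C_\delta$ is bounded below $\delta$. -/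
open Ordinal

/-- Limit step of the properness argument for `Q_{\bar C}`: if
`⟨p_n : n < ω⟩` is an increasing sequence of conditions,
`δ = sup_n sup(p_n)` is a limit ordinal, the new points
`(p_{n+1} ∪ {sup p_{n+1}}) \ (p_n ∪ {sup p_n})` avoid `C_δ`, and the
`sup(p_n)` are cofinal below `δ`, then `q = ⋃_n p_n` is closed below `δ`,
`sup(q) = δ` or `q` is bounded, and `q ∩ C_δ ⊆ p_0 ∪ {sup p_0}`, so in
particular `q ∩ C_δ` is bounded below `δ`. -/
theorem stmt5 (Cbar : Ordinal.{0} → Set Ordinal.{0})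
    (hCbar : ∀ δ, δ < omega1 → Order.IsSuccLimit δ →
      Cbar δ ⊆ Set.Iio δ ∧ ∀ β < δ, ∃ γ ∈ Cbar δ, β < γ)
    (p : ℕ → Set Ordinal.{0}) (hp : ∀ n, p n ∈ QbarC Cbar)
    (hinc : ∀ n, EndExt (p n) (p (n + 1)))
    (δ : Ordinal.{0}) (hδ : δ = ⨆ n, sSup (p n)) (hδlim : Order.IsSuccLimit δ)
    (havoid : ∀ n,
      ((p (n + 1) ∪ {sSup (p (n + 1))}) \ (p n ∪ {sSup (p n)})) ∩ Cbar δ = ∅)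
    (hcof : ∀ δ' < δ, Order.IsSuccLimit δ' → ∃ n, δ' < sSup (p n)) :
    (∀ δ'' < δ, Order.IsSuccLimit δ'' → sSup ((⋃ n, p n) ∩ Set.Iio δ'') = δ'' →
        δ'' ∈ ⋃ n, p n) ∧
    (sSup (⋃ n, p n) = δ ∨ sSup (⋃ n, p n) < δ) ∧
    (⋃ n, p n) ∩ Cbar δ ⊆ p 0 ∪ {sSup (p 0)} ∧
    sSup ((⋃ n, p n) ∩ Cbar δ) < δ := by

  have bddp : ∀ n, BddAbove (p n) := fun n => by
    obtain ⟨α, _, hsub, _, _⟩ := hp n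
    exact ⟨α, fun x hx => (hsub hx).le⟩
  have mono : ∀ {m n : ℕ}, m ≤ n → p m ⊆ p n :=
    fun {m n} h => (monotone_nat_of_le_succ (fun k => (hinc k).1)) h
  have eext : ∀ m n, m ≤ n → EndExt (p m) (p n) := by
    intro m n h
    induction n, h using Nat.le_induction with
    | base => exact ⟨subset_rfl, fun y hy x hx hle => hy⟩
    | succ k hk ih =>
      exact ⟨ih.1.trans (hinc k).1,
        fun y hy x hx hle => ih.2 y ((hinc k).2 y hy x (ih.1 hx) hle) x hx hle⟩
  have hsle : ∀ n, sSup (p n) ≤ δ := by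
    intro n
    rw [hδ]
    exact le_ciSup (Ordinal.bddAbove_range _) n
  have hxle : ∀ n, ∀ x ∈ p n, x ≤ δ :=
    fun n x hx => (le_csSup (bddp n) hx).trans (hsle n)
  have claim : ∀ n, ∀ x, x ∈ Cbar δ → x ∈ p n ∪ {sSup (p n)} →
      x ∈ p 0 ∪ {sSup (p 0)} := by
    intro n
    induction n with
    | zero => intro x _ h; exact h
    | succ k ih =>
      intro x hxC hx
      apply ih x hxC
      by_contra h
      have hmem : x ∈ ((p (k + 1) ∪ {sSup (p (k + 1))}) \ (p k ∪ {sSup (p k)})) ∩ Cbar δ :=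
        ⟨⟨hx, h⟩, hxC⟩
      rw [havoid k] at hmem
      exact hmem
  have part3 : (⋃ n, p n) ∩ Cbar δ ⊆ p 0 ∪ {sSup (p 0)} := by
    rintro x ⟨hxq, hxC⟩
    obtain ⟨m, hm⟩ := Set.mem_iUnion.1 hxq
    exact claim m x hxC (Or.inl hm)
  refine ⟨?_, ?_, part3, ?_⟩
  · -- closure
    intro δ'' hδ'' hlim'' hsup
    obtain ⟨n, hn⟩ := hcof δ'' hδ'' hlim''
    have hne : (p n).Nonempty := by
      by_contra h
      rw [Set.not_nonempty_iff_eq_empty] at h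
      rw [h, csSup_empty] at hn
      exact absurd hn (by simp)
    obtain ⟨x, hxp, hx⟩ := exists_lt_of_lt_csSup hne hn
    obtain ⟨α, hα, hsub, hclosed, hcond⟩ := hp n
    have heq : (⋃ m, p m) ∩ Set.Iio δ'' = p n ∩ Set.Iio δ'' := by
      ext y
      constructor
      · rintro ⟨hy, hylt⟩
        obtain ⟨m, hym⟩ := Set.mem_iUnion.1 hy
        rcases le_total m n with h | h
        · exact ⟨mono h hym, hylt⟩
        · exact ⟨(eext n m h).2 y hym x hxp (le_of_lt (lt_trans hylt hx)), hylt⟩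
      · rintro ⟨hy, h2⟩
        exact ⟨Set.mem_iUnion.2 ⟨n, hy⟩, h2⟩
    rw [heq] at hsup
    exact Set.mem_iUnion.2 ⟨n, hclosed δ'' (lt_trans hx (hsub hxp)) hlim'' hsup⟩
  · -- sup
    have hqle : sSup (⋃ n, p n) ≤ δ := by
      apply csSup_le'
      rintro x hx
      obtain ⟨m, hm⟩ := Set.mem_iUnion.1 hx
      exact hxle m x hm
    exact hqle.lt_or_eq.symm
  · -- boundedness of q ∩ Cbar δ
    rcases (hsle 0).lt_or_eq with h0 | h0
    · refine lt_of_le_of_lt (csSup_le' ?_) h0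
      intro x hx
      rcases part3 hx with h | h
      · exact le_csSup (bddp 0) h
      · exact le_of_eq h
    · have key : (⋃ n, p n) ∩ Cbar δ ⊆ p 0 ∩ Set.Iio δ := by
        rintro x ⟨hxq, hxC⟩
        rcases part3 ⟨hxq, hxC⟩ with h | h
        · refine ⟨h, ?_⟩
          rcases (hxle 0 x h).lt_or_eq with hlt | heq
          · exact hlt
          · exfalso
            obtain ⟨α, hα, hsub, _, _⟩ := hp 0
            have hδω : δ < omega1 := lt_trans (heq ▸ hsub h) hα
            have := (hCbar δ hδω hδlim).1 hxC
            rw [heq] at this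
            exact lt_irrefl δ this
        · exfalso
          have hxδ : x = δ := h.trans h0
          obtain ⟨m, hm⟩ := Set.mem_iUnion.1 hxq
          obtain ⟨α, hα, hsub, _, _⟩ := hp m
          have hδω : δ < omega1 := lt_trans (hxδ ▸ hsub hm) hα
          have := (hCbar δ hδω hδlim).1 hxC
          rw [hxδ] at this
          exact lt_irrefl δ this
      have hbdd0 : BddAbove (p 0 ∩ Set.Iio δ) := (bddp 0).mono Set.inter_subset_left
      have hsupp0 : sSup (p 0 ∩ Set.Iio δ) ≤ δ :=
        csSup_le' fun x hx => (hx.2 : x < δ).le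
      rcases hsupp0.lt_or_eq with h1 | h1
      · exact lt_of_le_of_lt (csSup_le' fun x hx => le_csSup hbdd0 (key hx)) h1
      · obtain ⟨α, hα, hsub, hcl, hcond⟩ := hp 0
        have hδα : δ ≤ α := h0 ▸ csSup_le' (fun x hx => (hsub hx).le)
        have hlt := hcond δ hδα hδlim h1
        refine lt_of_le_of_lt (csSup_le' ?_) hlt
        rintro x hx
        exact le_csSup ((bddp 0).mono Set.inter_subset_left) ⟨(key hx).1, hx.2⟩
end

section
/- Let $\bar C = \langle C_\delta : \delta < \omega_1 \text{ limit}\rangle$ with each $C_\delta$ unbounded in $\delta$ of order type $\omega$, and let $Q^1_{\bar C}$ be the set of functions $f : \alpha \to 2$ for non-limit $\alpha < \omega_1$ such that $f^{-1}(\{1\})$ is closed (in $\alpha$) and for every limit $\delta < \alpha$, $\sup(f^{-1}(\{1\}) \cap C_\delta) < \delta$, ordered by extension of functions. Suppose $\langle N_i : i \le \omega \rangle$ are countable elementary submodels of $(H(\chi), \in)$ with $Q^1_{\bar C} \in N_0$, $N_i \prec N_{i+1}$, $N_\omega = \bigcup_{i<\omega} N_i$, and $C_{N_\omega \cap \omega_1}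 = \{ N_i \cap \omega_1 : i < \omega \}$. Then there is no condition $q \in Q^1_{\bar C}$ that is simultaneously $(N_i, Q^1_{\bar C})$-generic for infinitely many $i < \omega$ and $(N_\omega, Q^1_{\bar C})$-generic with $\mathrm{dom}(q) \supseteq N_\omega \cap \omega_1$ forcing its generic club to be unbounded in $N_\omega \cap \omega_1$. -/
open Ordinal FirstOrder

/-- The language of set theory: a single binary relation symbol `mem`. -/
inductive memRel : ℕ → Type
  | mem : memRel 2

/-- The language of set theory. -/
def memLang : Language := ⟨fun _ => Empty, memRel⟩

/-- A set `A` of ZF-sets as a structure for the language of set theory,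
interpreting the relation symbol by true membership. -/
def memStr (A : Set ZFSet.{0}) : memLang.Structure A where
  funMap := fun f _ => f.elim
  RelMap | .mem => fun x => ((x 0) : ZFSet) ∈ ((x 1) : ZFSet)

/-- Satisfaction of a first-order formula of set theory in `(A, ∈)`. -/
def SatZ (A : Set ZFSet.{0}) {n : ℕ} (φ : memLang.Formula (Fin n))
    (v : Fin n → ↥A) : Prop :=
  @Language.Formula.Realize memLang ↥A (memStr A) (Fin n) φ v

/-- `N` is an elementary submodel of `(H, ∈)`:  `N ⊆ H` and every first-order
formula of set theory with parameters from `N` holds in `(N, ∈)` iff it holds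
in `(H, ∈)`. -/
def ElemIn (N H : Set ZFSet.{0}) : Prop :=
  ∃ hsub : N ⊆ H, ∀ (n : ℕ) (φ : memLang.Formula (Fin n)) (v : Fin n → ↥N),
    SatZ N φ v ↔ SatZ H φ (fun i => Set.inclusion hsub (v i))

/-- The von Neumann ZF-set coding an ordinal. -/
noncomputable def ordToZF (o : Ordinal.{0}) : ZFSet.{0} :=
  ZFSet.range fun i : o.ToType => ordToZF ((Ordinal.ToType.mk (o := o)).symm i).val
termination_by o
decreasing_by exact ((Ordinal.ToType.mk (o := o)).symm i).2

/-- `x` is hereditarily of cardinality `< χ`. -/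
inductive Hered (χ : Cardinal.{1}) : ZFSet.{0} → Prop
  | intro (x : ZFSet.{0}) (hx : Cardinal.mk x.toSet < χ) (ih : ∀ y ∈ x, Hered χ y) :
      Hered χ x

/-- `H(χ)`: the sets hereditarily of cardinality `< χ`. -/
def Hset (χ : Cardinal.{1}) : Set ZFSet.{0} := {x | Hered χ x}

/-- The ordinal `N ∩ ω₁` (the supremum of the countable ordinals whose codes
belong to `N`; for `N` elementary this set is an ordinal). -/
noncomputable def traceOrd (N : Set ZFSet.{0}) : Ordinal.{0} :=
  sSup {α | α < omega1 ∧ ordToZF α ∈ N}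

/-- The ZF-set coding a condition of `Q^1_{\bar C}`: the function with domain
`α` sending `β < α` to `f β ∈ 2`, coded as a set of Kuratowski pairs. -/
noncomputable def condCode (α : Ordinal.{0}) (f : Ordinal.{0} → Bool) : ZFSet.{0} :=
  ZFSet.range fun i : α.ToType =>
    ZFSet.pair (ordToZF ((Ordinal.ToType.mk (o := α)).symm i).val)
      (ordToZF (if f ((Ordinal.ToType.mk (o := α)).symm i).val then 1 else 0))

/-- `p` codes a condition of `Q^1_{\bar C}`: a function `f : α → 2` for some
non-limit `α < ω₁` such that `f⁻¹({1})` is closed in `α` and for every limit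
`δ < α`, `sup(f⁻¹({1}) ∩ C_δ) < δ`. -/
def IsCondZ (Cbar : Ordinal.{0} → Set Ordinal.{0}) (p : ZFSet.{0}) : Prop :=
  ∃ (α : Ordinal.{0}) (f : Ordinal.{0} → Bool), α < omega1 ∧ ¬ Order.IsSuccLimit α ∧
    p = condCode α f ∧
    (∀ δ < α, Order.IsSuccLimit δ → sSup {β | β < δ ∧ f β = true} = δ → f δ = true) ∧
    (∀ δ < α, Order.IsSuccLimit δ → sSup {β | β ∈ Cbar δ ∧ f β = true} < δ)

/-- `q` is `(N, Q^1_{\bar C})`-generic: for every dense open subset `D` of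
`Q^1_{\bar C}` with `D ∈ N`, the set `D ∩ N` is predense above `q`
(the ordering of conditions is extension of functions, i.e. inclusion of
their ZF-codes). -/
def IsGenericFor (Cbar : Ordinal.{0} → Set Ordinal.{0}) (N : Set ZFSet.{0})
    (q : ZFSet.{0}) : Prop :=
  ∀ Dz : ZFSet.{0}, Dz ∈ N →
    (∀ x ∈ Dz.toSet, IsCondZ Cbar x) →
    (∀ p, IsCondZ Cbar p → ∃ r ∈ Dz.toSet, p ⊆ r) →
    (∀ p r, r ∈ Dz.toSet → IsCondZ Cbar p → r ⊆ p → p ∈ Dz.toSet) →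
    ∀ q', IsCondZ Cbar q' → q ⊆ q' →
      ∃ r ∈ Dz.toSet ∩ N, ∃ s, IsCondZ Cbar s ∧ q' ⊆ s ∧ r ⊆ s



-- ===== auxiliary lemmas =====

theorem ZFSet.mem_toSet (a u : ZFSet.{0}) : a ∈ u.toSet ↔ a ∈ u := Iff.rfl

theorem ZFSet.toSet_insert (x y : ZFSet.{0}) : (insert x y).toSet = insert x y.toSet :=
  ZFSet.coe_insert x y

theorem ZFSet.toSet_empty : (∅ : ZFSet.{0}).toSet = ∅ := ZFSet.coe_empty

theorem mem_ordToZF {x : ZFSet.{0}} {o : Ordinal.{0}} :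
    x ∈ ordToZF o ↔ ∃ a, a < o ∧ x = ordToZF a := by
  rw [ordToZF, ZFSet.mem_range]
  constructor
  · rintro ⟨i, rfl⟩
    exact ⟨_, ((Ordinal.ToType.mk (o := o)).symm i).2, rfl⟩
  · rintro ⟨a, ha, rfl⟩
    exact ⟨Ordinal.ToType.mk (o := o) ⟨a, ha⟩, by simp⟩

theorem ordToZF_mem {a b : Ordinal.{0}} (h : a < b) : ordToZF a ∈ ordToZF b :=
  mem_ordToZF.2 ⟨a, h, rfl⟩

theorem ordToZF_inj {a b : Ordinal.{0}} (h : ordToZF a = ordToZF b) : a = b := by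
  rcases lt_trichotomy a b with hl | he | hl
  · exact absurd (h ▸ ordToZF_mem hl) (ZFSet.mem_irrefl _)
  · exact he
  · exact absurd (h ▸ ordToZF_mem hl) (ZFSet.mem_irrefl _)

theorem ordToZF_mem_iff {a b : Ordinal.{0}} : ordToZF a ∈ ordToZF b ↔ a < b := by
  refine ⟨fun h => ?_, ordToZF_mem⟩
  rcases mem_ordToZF.1 h with ⟨c, hc, he⟩
  rwa [ordToZF_inj he]

theorem ordToZF_zero : ordToZF (0 : Ordinal.{0}) = ∅ := by
  ext x; simp [mem_ordToZF, ZFSet.notMem_empty, not_lt_zero]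

theorem ordToZF_succ (a : Ordinal.{0}) :
    ordToZF (a + 1) = insert (ordToZF a) (ordToZF a) := by
  ext x
  rw [mem_ordToZF, ZFSet.mem_insert_iff]
  constructor
  · rintro ⟨c, hc, rfl⟩
    rcases lt_or_eq_of_le (Order.lt_add_one_iff.1 hc) with h | h
    · exact Or.inr (ordToZF_mem h)
    · exact Or.inl (by rw [h])
  · rintro (rfl | hx)
    · exact ⟨a, lt_add_one a, rfl⟩
    · rcases mem_ordToZF.1 hx with ⟨c, hc, rfl⟩
      exact ⟨c, hc.trans (lt_add_one a), rfl⟩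

theorem mem_condCode {x : ZFSet.{0}} {α : Ordinal.{0}} {f : Ordinal.{0} → Bool} :
    x ∈ condCode α f ↔
      ∃ β, β < α ∧ x = ZFSet.pair (ordToZF β) (ordToZF (if f β then 1 else 0)) := by
  rw [condCode, ZFSet.mem_range]
  constructor
  · rintro ⟨i, rfl⟩
    exact ⟨_, ((Ordinal.ToType.mk (o := α)).symm i).2, rfl⟩
  · rintro ⟨a, ha, rfl⟩
    exact ⟨Ordinal.ToType.mk (o := α) ⟨a, ha⟩, by simp⟩

theorem boolCode_inj {a b : Bool}
    (h : ordToZF (if a then 1 else 0) = ordToZF (if b then 1 else 0)) : a = b := by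
  have := ordToZF_inj h
  cases a <;> cases b <;> simp_all

/-- extension of conditions -/
theorem condCode_subset {α α' : Ordinal.{0}} {f f' : Ordinal.{0} → Bool}
    (h : condCode α f ⊆ condCode α' f') : α ≤ α' ∧ ∀ β < α, f β = f' β := by
  have key : ∀ β < α, β < α' ∧ f β = f' β := by
    intro β hβ
    have hm := h (mem_condCode.2 ⟨β, hβ, rfl⟩)
    rcases mem_condCode.1 hm with ⟨γ, hγ, he⟩
    obtain ⟨h1, h2⟩ := ZFSet.pair_injective he
    obtain rfl := ordToZF_inj h1
    exact ⟨hγ, boolCode_inj h2⟩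
  constructor
  · by_contra hlt
    exact absurd (key α' (lt_of_not_ge hlt)).1 (lt_irrefl _)
  · exact fun β hβ => (key β hβ).2

theorem condCode_inj {α α' : Ordinal.{0}} {f f' : Ordinal.{0} → Bool}
    (h : condCode α f = condCode α' f') : α = α' ∧ ∀ β < α, f β = f' β := by
  have h1 := condCode_subset (α := α) (α' := α') (f := f) (f' := f')
    (fun x hx => h ▸ hx)
  have h2 := condCode_subset (α := α') (α' := α) (f := f') (f' := f)
    (fun x hx => h ▸ hx)
  exact ⟨le_antisymm h1.1 h2.1, h1.2⟩

theorem pair_true_mem_condCode {γ α : Ordinal.{0}} {f : Ordinal.{0} → Bool}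
    (h : ZFSet.pair (ordToZF γ) (ordToZF 1) ∈ condCode α f) : γ < α ∧ f γ = true := by
  rcases mem_condCode.1 h with ⟨β, hβ, he⟩
  obtain ⟨h1, h2⟩ := ZFSet.pair_injective he
  obtain rfl := ordToZF_inj h1
  refine ⟨hβ, ?_⟩
  by_contra hf
  simp only [Bool.not_eq_true] at hf
  rw [hf] at h2
  simpa using ordToZF_inj h2

theorem mem_condCode_of_true {γ α : Ordinal.{0}} {f : Ordinal.{0} → Bool}
    (hγ : γ < α) (hf : f γ = true) :
    ZFSet.pair (ordToZF γ) (ordToZF 1) ∈ condCode α f :=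
  mem_condCode.2 ⟨γ, hγ, by rw [hf]; simp⟩

section hered
variable {χ : Cardinal.{1}}

theorem Hered.card_lt {x : ZFSet.{0}} (h : Hered χ x) : Cardinal.mk x.toSet < χ := by
  cases h; assumption

theorem Hered.mem {x y : ZFSet.{0}} (h : Hered χ x) (hy : y ∈ x) : Hered χ y := by
  cases h with | intro _ _ ih => exact ih y hy

theorem Hset_trans {x y : ZFSet.{0}} (h : x ∈ Hset χ) (hy : y ∈ x) : y ∈ Hset χ :=
  Hered.mem h hy

variable (hχinf : Cardinal.aleph0 ≤ χ)
include hχinf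

theorem hered_insert {x y : ZFSet.{0}} (hx : Hered χ x) (hy : Hered χ y) :
    Hered χ (insert x y) := by
  refine Hered.intro _ ?_ ?_
  · rw [ZFSet.toSet_insert]
    calc Cardinal.mk (insert x y.toSet : Set ZFSet.{0}) ≤ Cardinal.mk y.toSet + 1 :=
          Cardinal.mk_insert_le
      _ < χ := by
          rcases lt_or_ge (Cardinal.mk y.toSet) Cardinal.aleph0 with h | h
          · exact lt_of_lt_of_le (Cardinal.add_lt_aleph0 h Cardinal.one_lt_aleph0) hχinf
          · rw [Cardinal.add_one_of_aleph0_le h]; exact hy.card_lt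
  · intro z hz
    rcases ZFSet.mem_insert_iff.1 hz with rfl | hz
    · exact hx
    · exact hy.mem hz

theorem hered_empty : Hered χ (∅ : ZFSet.{0}) := by
  refine Hered.intro _ ?_ (by simp [ZFSet.notMem_empty])
  rw [ZFSet.toSet_empty]
  simpa using lt_of_lt_of_le Cardinal.aleph0_pos hχinf

theorem hered_singleton {x : ZFSet.{0}} (hx : Hered χ x) : Hered χ ({x} : ZFSet.{0}) :=
  hered_insert hχinf hx (hered_empty hχinf)

theorem hered_upair {x y : ZFSet.{0}} (hx : Hered χ x) (hy : Hered χ y) :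
    Hered χ ({x, y} : ZFSet.{0}) :=
  hered_insert hχinf hx (hered_singleton hχinf hy)

theorem hered_kpair {x y : ZFSet.{0}} (hx : Hered χ x) (hy : Hered χ y) :
    Hered χ (ZFSet.pair x y) :=
  hered_upair hχinf (hered_singleton hχinf hx) (hered_upair hχinf hx hy)

end hered

theorem toSet_ordToZF (a : Ordinal.{0}) :
    (ordToZF a).toSet = ordToZF '' (Set.Iio a) := by
  ext x
  simp only [ZFSet.mem_toSet, mem_ordToZF, Set.mem_image, Set.mem_Iio]
  exact ⟨fun ⟨c, h1, h2⟩ => ⟨c, h1, h2.symm⟩, fun ⟨c, h1, h2⟩ => ⟨c, h1, h2.symm⟩⟩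

theorem hered_ordToZF {χ : Cardinal.{1}} (hχ : Cardinal.aleph 1 < χ)
    {a : Ordinal.{0}} (ha : a < omega1) : Hered χ (ordToZF a) := by
  induction a using Ordinal.induction with
  | h a ih =>
    refine Hered.intro _ ?_ ?_
    · rw [toSet_ordToZF]
      calc Cardinal.mk (ordToZF '' (Set.Iio a)) ≤ Cardinal.mk (Set.Iio a) :=
            Cardinal.mk_image_le
        _ = Cardinal.lift.{1} a.card := Ordinal.mk_Iio_ordinal a
        _ < Cardinal.lift.{1} (Cardinal.aleph 1) := by
            rw [Cardinal.lift_lt]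
            exact Cardinal.lt_ord.1 ha
        _ ≤ χ := by
            rw [Cardinal.lift_aleph]
            simpa using hχ.le
    · intro y hy
      rcases mem_ordToZF.1 hy with ⟨c, hc, rfl⟩
      exact ih c hc (hc.trans ha)

theorem osSup_le {S : Set Ordinal.{0}} {c : Ordinal.{0}} (h : ∀ x ∈ S, x ≤ c) :
    sSup S ≤ c := by
  rcases S.eq_empty_or_nonempty with rfl | hne
  · rw [csSup_empty]; exact bot_le
  · exact csSup_le hne h

theorem exists_gt_of_lt_osSup {S : Set Ordinal.{0}} {b : Ordinal.{0}}
    (h : b < sSup S) : ∃ a ∈ S, b < a := by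
  by_contra hc
  push_neg at hc
  exact absurd (osSup_le hc) (not_le.2 h)

theorem osSup_le_osSup {S T : Set Ordinal.{0}} (hST : S ⊆ T) (hT : BddAbove T) :
    sSup S ≤ sSup T :=
  osSup_le fun x hx => le_csSup hT (hST hx)

theorem isLimit_osSup {S : Set Ordinal.{0}} (hne : S.Nonempty) (hb : BddAbove S)
    (hsucc : ∀ a ∈ S, a + 1 ∈ S) : Order.IsSuccLimit (sSup S) := by
  rw [Ordinal.isSuccLimit_iff, Order.isSuccPrelimit_iff_succ_lt]
  constructor
  · rcases hne with ⟨a, ha⟩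
    have h1 : a + 1 ≤ sSup S := le_csSup hb (hsucc a ha)
    have : (0 : Ordinal.{0}) < a + 1 := by
      exact lt_of_le_of_lt (zero_le (a := a)) (lt_add_one a)
    exact fun h0 => absurd (h0 ▸ h1) (not_le.2 this)
  · intro b hbs
    rcases exists_gt_of_lt_osSup hbs with ⟨a, haS, hba⟩
    rw [← Ordinal.add_one_eq_succ]
    calc b + 1 ≤ a := Order.add_one_le_of_lt hba
      _ < a + 1 := lt_add_one a
      _ ≤ sSup S := le_csSup hb (hsucc a haS)

def Sset (N : Set ZFSet.{0}) : Set Ordinal.{0} := {α | α < omega1 ∧ ordToZF α ∈ N}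

theorem traceOrd_eq (N : Set ZFSet.{0}) : traceOrd N = sSup (Sset N) := rfl

theorem bddAbove_Sset (N : Set ZFSet.{0}) : BddAbove (Sset N) :=
  ⟨omega1, fun _ hx => hx.1.le⟩

theorem traceOrd_mono {N M : Set ZFSet.{0}} (h : N ⊆ M) : traceOrd N ≤ traceOrd M :=
  osSup_le_osSup (fun a ha => ⟨ha.1, h ha.2⟩) (bddAbove_Sset M)

attribute [local instance] memStr

namespace MemFm

/-- bound variable -/
def bv {k n : ℕ} (i : Fin n) : memLang.Term (Fin k ⊕ Fin n) :=
  Language.Term.var (Sum.inr i)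

/-- parameter (free variable) -/
def pv {k n : ℕ} (i : Fin k) : memLang.Term (Fin k ⊕ Fin n) :=
  Language.Term.var (Sum.inl i)

/-- membership formula -/
def fmem {k n : ℕ} (t u : memLang.Term (Fin k ⊕ Fin n)) :
    memLang.BoundedFormula (Fin k) n :=
  Language.Relations.boundedFormula₂ memRel.mem t u

/-- equality formula -/
def feq {k n : ℕ} (t u : memLang.Term (Fin k ⊕ Fin n)) :
    memLang.BoundedFormula (Fin k) n :=
  Language.Term.bdEqual t u

variable {A : Set ZFSet.{0}} {k n : ℕ}

@[simp] theorem realize_fmem {t u : memLang.Term (Fin k ⊕ Fin n)}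
    {v : Fin k → ↥A} {xs : Fin n → ↥A} :
    (fmem t u).Realize v xs ↔
      ((Language.Term.realize (M := ↥A) (Sum.elim v xs) t : ↥A) : ZFSet.{0}) ∈
        ((Language.Term.realize (M := ↥A) (Sum.elim v xs) u : ↥A) : ZFSet.{0}) := by
  rw [fmem]
  exact Iff.rfl

@[simp] theorem realize_feq {t u : memLang.Term (Fin k ⊕ Fin n)}
    {v : Fin k → ↥A} {xs : Fin n → ↥A} :
    (feq t u).Realize v xs ↔
      ((Language.Term.realize (M := ↥A) (Sum.elim v xs) t : ↥A) : ZFSet.{0}) =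
        ((Language.Term.realize (M := ↥A) (Sum.elim v xs) u : ↥A) : ZFSet.{0}) := by
  rw [feq, Language.BoundedFormula.realize_bdEqual, Subtype.ext_iff]

@[simp] theorem realize_bv {i : Fin n} {v : Fin k → ↥A} {xs : Fin n → ↥A} :
    (Language.Term.realize (M := ↥A) (Sum.elim v xs) (bv (k := k) i)) = xs i := rfl

@[simp] theorem realize_pv {i : Fin k} {v : Fin k → ↥A} {xs : Fin n → ↥A} :
    (Language.Term.realize (M := ↥A) (Sum.elim v xs) (pv (n := n) i)) = v i := rfl

end MemFm

theorem satZ_iff {A : Set ZFSet.{0}} {n : ℕ} {φ : memLang.Formula (Fin n)}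
    {v : Fin n → ↥A} : SatZ A φ v ↔ Language.Formula.Realize (M := ↥A) φ v :=
  Iff.rfl

theorem fin1_snoc {M : Type*} (a : M) :
    (Fin.snoc (default : Fin 0 → M) a) = (fun _ : Fin 1 => a) := by
  funext i
  simp [Fin.snoc]

theorem satZ_ex_iff {A : Set ZFSet.{0}} {k : ℕ}
    {ψ : memLang.BoundedFormula (Fin k) 1} {v : Fin k → ↥A} :
    SatZ A ψ.ex v ↔ ∃ a : ↥A, ψ.Realize v (fun _ => a) := by
  rw [satZ_iff]
  show Language.BoundedFormula.Realize _ v default ↔ _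
  rw [Language.BoundedFormula.realize_ex]
  exact ⟨fun ⟨a, ha⟩ => ⟨a, by rwa [fin1_snoc] at ha⟩,
    fun ⟨a, ha⟩ => ⟨a, by rwa [fin1_snoc]⟩⟩

/-- The key consequence of elementarity: if a one-variable existential
(with parameters from `N`) has a witness in `H`, it has one in `N`. -/
theorem elem_witness {N Hs : Set ZFSet.{0}} (hel : ElemIn N Hs) {k : ℕ}
    (ψ : memLang.BoundedFormula (Fin k) 1) (v : Fin k → ↥N) (vH : Fin k → ↥Hs)
    (hv : ∀ i, (vH i : ZFSet.{0}) = (v i : ZFSet.{0}))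
    (x : ↥Hs) (hx : ψ.Realize vH (fun _ => x)) :
    ∃ d : ↥N, ∃ hd : (d : ZFSet.{0}) ∈ Hs, ψ.Realize vH (fun _ => (⟨d, hd⟩ : ↥Hs)) := by
  obtain ⟨hsub, hiff⟩ := hel
  have hvH : vH = fun i => Set.inclusion hsub (v i) := by
    funext i; exact Subtype.ext (hv i)
  subst hvH
  set χform : memLang.Formula (Fin (k + 1)) :=
    Language.Formula.relabel
      (Sum.elim Fin.castSucc (fun _ : Fin 1 => Fin.last k)) ψ.toFormula with hχ
  have key : ∀ (B : Set ZFSet.{0}) (w : Fin (k + 1) → ↥B),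
      SatZ B χform w ↔
        Language.BoundedFormula.Realize (M := ↥B) ψ (fun i => w i.castSucc)
          (fun _ => w (Fin.last k)) := by
    intro B w
    rw [satZ_iff, hχ, Language.Formula.realize_relabel,
      Language.BoundedFormula.realize_toFormula]
    exact Iff.rfl
  have h1 : SatZ Hs ψ.ex (fun i => Set.inclusion hsub (v i)) :=
    satZ_ex_iff.2 ⟨x, hx⟩
  have h2 : SatZ N ψ.ex v := (hiff k ψ.ex v).2 h1
  obtain ⟨d, hd⟩ := satZ_ex_iff.1 h2
  have h3 : SatZ N χform (Fin.snoc v d) := by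
    rw [key N]
    have e1 : (fun i : Fin k => (Fin.snoc v d : Fin (k+1) → ↥N) i.castSucc) = v := by
      funext i; simp
    have e2 : (Fin.snoc v d : Fin (k+1) → ↥N) (Fin.last k) = d := by simp
    rw [e1, e2]
    exact hd
  have h4 := (hiff (k + 1) χform (Fin.snoc v d)).1 h3
  rw [key Hs] at h4
  refine ⟨d, hsub d.2, ?_⟩
  have e1 : (fun i : Fin k =>
      Set.inclusion hsub ((Fin.snoc v d : Fin (k+1) → ↥N) i.castSucc)) =
      (fun i => Set.inclusion hsub (v i)) := by
    funext i; simp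
  have e2 : Set.inclusion hsub ((Fin.snoc v d : Fin (k+1) → ↥N) (Fin.last k)) =
      (⟨d, hsub d.2⟩ : ↥Hs) := by simp
  rw [e1, e2] at h4
  exact h4

namespace MemFm

variable {A : Set ZFSet.{0}}

/-- "x is empty" -/
def emptyFm : memLang.BoundedFormula (Fin 0) 1 :=
  (fmem (bv 1) (bv 0)).not.all

theorem realize_emptyFm {v : Fin 0 → ↥A} {x : ↥A} :
    emptyFm.Realize v (fun _ => x) ↔ ∀ a : ↥A, ¬((a : ZFSet.{0}) ∈ (x : ZFSet.{0})) := by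
  simp [emptyFm, Fin.snoc]

/-- "x = b ∪ {b}", parameter 0 = b. -/
def succFm : memLang.BoundedFormula (Fin 1) 1 :=
  ((fmem (bv 1) (bv 0)).iff ((fmem (bv 1) (pv 0)) ⊔ (feq (bv 1) (pv 0)))).all

theorem realize_succFm {v : Fin 1 → ↥A} {x : ↥A} :
    succFm.Realize v (fun _ => x) ↔
      ∀ a : ↥A, ((a : ZFSet.{0}) ∈ (x : ZFSet.{0}) ↔
        (a : ZFSet.{0}) ∈ (v 0 : ZFSet.{0}) ∨ (a : ZFSet.{0}) = (v 0 : ZFSet.{0})) := by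
  simp [succFm, Fin.snoc]

/-- "c codes a true point of the condition r above b":
`∃ w z, w ∈ r ∧ z ∈ w ∧ z = {c, one} ∧ b ∈ c`. Parameters: 0 = r, 1 = one, 2 = b. -/
def witFm : memLang.BoundedFormula (Fin 3) 1 :=
  (((fmem (bv 1) (pv 0)) ⊓ ((fmem (bv 2) (bv 1)) ⊓
    ((((fmem (bv 3) (bv 2)).iff ((feq (bv 3) (bv 0)) ⊔ (feq (bv 3) (pv 1)))).all) ⊓
      (fmem (pv 2) (bv 0))))).ex).ex

theorem realize_witFm {v : Fin 3 → ↥A} {c : ↥A} :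
    witFm.Realize v (fun _ => c) ↔
      ∃ w z : ↥A, (w : ZFSet.{0}) ∈ (v 0 : ZFSet.{0}) ∧
        (z : ZFSet.{0}) ∈ (w : ZFSet.{0}) ∧
        (∀ t : ↥A, (t : ZFSet.{0}) ∈ (z : ZFSet.{0}) ↔
          ((t : ZFSet.{0}) = (c : ZFSet.{0}) ∨ (t : ZFSet.{0}) = (v 1 : ZFSet.{0}))) ∧
        (v 2 : ZFSet.{0}) ∈ (c : ZFSet.{0}) := by
  simp [witFm, Fin.snoc, show ((2:Fin 3):ℕ)=2 from rfl, show ((3:Fin 4):ℕ)=3 from rfl, show ((3:Fin 5):ℕ)=3 from rfl, show ((4:Fin 5):ℕ)=4 from rfl, show ((3:Fin 6):ℕ)=3 from rfl, show ((4:Fin 6):ℕ)=4 from rfl, show ((5:Fin 6):ℕ)=5 from rfl]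

/-- "D = {p ∈ Q : ∃ c w z, w ∈ p ∧ z ∈ w ∧ z = {c,one} ∧ b ∈ c}".
Parameters: 0 = Q, 1 = one, 2 = b. -/
def denseFm : memLang.BoundedFormula (Fin 3) 1 :=
  (((fmem (bv 1) (bv 0)).iff ((fmem (bv 1) (pv 0)) ⊓
    ((((fmem (bv 3) (bv 1)) ⊓ ((fmem (bv 4) (bv 3)) ⊓
      ((((fmem (bv 5) (bv 4)).iff ((feq (bv 5) (bv 2)) ⊔ (feq (bv 5) (pv 1)))).all) ⊓
        (fmem (pv 2) (bv 2))))).ex).ex).ex))).all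

theorem realize_denseFm {v : Fin 3 → ↥A} {D : ↥A} :
    denseFm.Realize v (fun _ => D) ↔
      ∀ p : ↥A, ((p : ZFSet.{0}) ∈ (D : ZFSet.{0}) ↔
        ((p : ZFSet.{0}) ∈ (v 0 : ZFSet.{0}) ∧
          ∃ c w z : ↥A, (w : ZFSet.{0}) ∈ (p : ZFSet.{0}) ∧
            (z : ZFSet.{0}) ∈ (w : ZFSet.{0}) ∧
            (∀ t : ↥A, (t : ZFSet.{0}) ∈ (z : ZFSet.{0}) ↔
              ((t : ZFSet.{0}) = (c : ZFSet.{0}) ∨ (t : ZFSet.{0}) = (v 1 : ZFSet.{0}))) ∧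
            (v 2 : ZFSet.{0}) ∈ (c : ZFSet.{0}))) := by
  simp [denseFm, Fin.snoc, show ((2:Fin 3):ℕ)=2 from rfl, show ((3:Fin 4):ℕ)=3 from rfl, show ((3:Fin 5):ℕ)=3 from rfl, show ((4:Fin 5):ℕ)=4 from rfl, show ((3:Fin 6):ℕ)=3 from rfl, show ((4:Fin 6):ℕ)=4 from rfl, show ((5:Fin 6):ℕ)=5 from rfl]

end MemFm

theorem omega1_isLimit : Order.IsSuccLimit omega1 :=
  Cardinal.isSuccLimit_ord (Cardinal.aleph0_le_aleph 1)

theorem add_one_lt_omega1 {β : Ordinal.{0}} (h : β < omega1) : β + 1 < omega1 := by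
  rw [Ordinal.add_one_eq_succ]
  exact omega1_isLimit.succ_lt h

theorem mem_zfpair_iff {z x y : ZFSet.{0}} :
    z ∈ ZFSet.pair x y ↔ z = ({x} : ZFSet) ∨ z = ({x, y} : ZFSet) := by
  rw [ZFSet.pair]
  exact ZFSet.mem_pair

theorem doub_abs {χ : Cardinal.{1}} {z c o : ZFSet.{0}}
    (hz : z ∈ Hset χ) (hc : c ∈ Hset χ) (ho : o ∈ Hset χ) :
    (∀ t : ↥(Hset χ), ((t : ZFSet.{0}) ∈ z ↔ ((t : ZFSet.{0}) = c ∨ (t : ZFSet.{0}) = o)))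
      ↔ z = ({c, o} : ZFSet) := by
  constructor
  · intro h
    ext t
    rw [ZFSet.mem_pair]
    constructor
    · intro ht; exact (h ⟨t, Hset_trans hz ht⟩).1 ht
    · rintro (rfl | rfl)
      · exact (h ⟨t, hc⟩).2 (Or.inl rfl)
      · exact (h ⟨t, ho⟩).2 (Or.inr rfl)
  · rintro rfl t
    exact ZFSet.mem_pair

/-- Soundness of the witness formula on conditions. -/
theorem wit_sound {α : Ordinal.{0}} {f : Ordinal.{0} → Bool} {w z c : ZFSet.{0}}
    {β : Ordinal.{0}} (h1 : 1 ≤ β)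
    (hw : w ∈ condCode α f) (hz : z ∈ w) (hze : z = ({c, ordToZF 1} : ZFSet))
    (hb : ordToZF β ∈ c) :
    ∃ γ, c = ordToZF γ ∧ β < γ ∧ γ < α ∧ f γ = true := by
  rcases mem_condCode.1 hw with ⟨γ₀, hγ₀, rfl⟩
  subst hze
  rcases mem_zfpair_iff.1 hz with he | he
  · -- {c, 1̂} = {γ̂₀} : then c = 1̂, contradiction with 1 ≤ β
    obtain ⟨rfl, h2⟩ := ZFSet.pair_eq_singleton_iff.1 he
    exfalso
    have hlt := ordToZF_mem_iff.1 hb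
    rw [← ordToZF_inj h2] at hlt
    exact absurd h1 (not_le.2 hlt)
  · -- {c, 1̂} = {γ̂₀, ε̂}
    have hc2 : c = ordToZF γ₀ ∨ c = ordToZF (if f γ₀ then 1 else 0) := by
      have : c ∈ ({c, ordToZF 1} : ZFSet) := ZFSet.mem_pair.2 (Or.inl rfl)
      rw [he] at this
      exact ZFSet.mem_pair.1 this
    have hone2 : ordToZF 1 = ordToZF γ₀ ∨ ordToZF 1 = ordToZF (if f γ₀ then 1 else 0) := by
      have : ordToZF 1 ∈ ({c, ordToZF 1} : ZFSet) := ZFSet.mem_pair.2 (Or.inr rfl)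
      rw [he] at this
      exact ZFSet.mem_pair.1 this
    rcases hc2 with rfl | hce
    · -- c = γ̂₀
      have hβγ : β < γ₀ := ordToZF_mem_iff.1 hb
      rcases hone2 with h | h
      · exfalso
        rw [← ordToZF_inj h] at hβγ
        exact absurd h1 (not_le.2 hβγ)
      · have := ordToZF_inj h
        have hf : f γ₀ = true := by
          by_contra hfc
          simp only [Bool.not_eq_true] at hfc
          rw [hfc] at this
          simp at this
        exact ⟨γ₀, rfl, hβγ, hγ₀, hf⟩
    · -- c = ε̂ with ε ≤ 1 : contradiction
      exfalso
      rw [hce] at hb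
      have := ordToZF_mem_iff.1 hb
      rcases Bool.dichotomy (f γ₀) with hfe | hfe <;> rw [hfe] at this
      · exact absurd this (zero_le (a := β)).not_gt
      · exact absurd h1 (not_le.2 this)

theorem wit_complete {α γ β : Ordinal.{0}} {f : Ordinal.{0} → Bool}
    (hγα : γ < α) (hf : f γ = true) (hβγ : β < γ) :
    ∃ w z : ZFSet.{0}, w ∈ condCode α f ∧ z ∈ w ∧
      z = ({ordToZF γ, ordToZF 1} : ZFSet) ∧ ordToZF β ∈ ordToZF γ :=
  ⟨ZFSet.pair (ordToZF γ) (ordToZF 1), ({ordToZF γ, ordToZF 1} : ZFSet),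
    mem_condCode_of_true hγα hf, mem_zfpair_iff.2 (Or.inr rfl), rfl, ordToZF_mem hβγ⟩

theorem elemIn_sub {N H : Set ZFSet.{0}} (h : ElemIn N H) : N ⊆ H := by
  obtain ⟨hsub, -⟩ := h
  exact hsub

section elemapps
open MemFm

variable {χ : Cardinal.{1}} {N : Set ZFSet.{0}}
  (hχ : Cardinal.aleph 1 < χ) (hel : ElemIn N (Hset χ))

theorem aleph0_le_of_aleph1_lt (hχ : Cardinal.aleph 1 < χ) : Cardinal.aleph0 ≤ χ :=
  le_of_lt (lt_of_le_of_lt (Cardinal.aleph0_le_aleph 1) hχ)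

include hχ hel

theorem zero_code_mem : ordToZF 0 ∈ N := by
  have hemp : (∅ : ZFSet.{0}) ∈ Hset χ := hered_empty (aleph0_le_of_aleph1_lt hχ)
  obtain ⟨d, hd, hreal⟩ := elem_witness hel emptyFm
    (fun i => i.elim0) (fun i => i.elim0) (fun i => i.elim0) ⟨∅, hemp⟩
    (by rw [realize_emptyFm]; exact fun a h => ZFSet.notMem_empty _ h)
  rw [realize_emptyFm] at hreal
  have hde : (d : ZFSet.{0}) = ∅ := by
    rw [ZFSet.eq_empty]
    intro y hy
    exact hreal ⟨y, Hset_trans hd hy⟩ hy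
  rw [ordToZF_zero, ← hde]
  exact d.2

theorem succ_code_mem {β : Ordinal.{0}} (hβ : β < omega1) (hbN : ordToZF β ∈ N) :
    ordToZF (β + 1) ∈ N := by
  have hs1 : ordToZF (β + 1) ∈ Hset χ := hered_ordToZF hχ (add_one_lt_omega1 hβ)
  obtain ⟨d, hd, hreal⟩ := elem_witness hel succFm
    ![⟨ordToZF β, hbN⟩] ![⟨ordToZF β, elemIn_sub hel hbN⟩]
    (fun i => by fin_cases i <;> rfl)
    ⟨ordToZF (β + 1), hs1⟩
    (by
      rw [realize_succFm]
      intro a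
      simp only [Matrix.cons_val_zero]
      rw [ordToZF_succ, ZFSet.mem_insert_iff]
      tauto)
  rw [realize_succFm] at hreal
  simp only [Matrix.cons_val_zero] at hreal
  have hde : (d : ZFSet.{0}) = ordToZF (β + 1) := by
    ext y
    rw [ordToZF_succ, ZFSet.mem_insert_iff]
    constructor
    · intro hy
      have := (hreal ⟨y, Hset_trans hd hy⟩).1 hy
      tauto
    · intro hy
      have hyH : y ∈ Hset χ := Hset_trans hs1 (by rw [ordToZF_succ, ZFSet.mem_insert_iff]; exact hy)
      exact (hreal ⟨y, hyH⟩).2 (by tauto)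
  rw [← hde]
  exact d.2

theorem wit_in_N {αr : Ordinal.{0}} {fr : Ordinal.{0} → Bool}
    (hαr : αr < omega1) (hr : condCode αr fr ∈ N) (hone : ordToZF 1 ∈ N)
    {β : Ordinal.{0}} (hβ1 : 1 ≤ β) (hbN : ordToZF β ∈ N)
    {γ₀ : Ordinal.{0}} (hg1 : β < γ₀) (hg2 : γ₀ < αr) (hg3 : fr γ₀ = true) :
    ∃ γ, ordToZF γ ∈ N ∧ β < γ ∧ γ < αr ∧ fr γ = true := by
  have hrH : condCode αr fr ∈ Hset χ := elemIn_sub hel hr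
  have honeH : ordToZF 1 ∈ Hset χ := elemIn_sub hel hone
  have hbH : ordToZF β ∈ Hset χ := elemIn_sub hel hbN
  have hγ0H : ordToZF γ₀ ∈ Hset χ := hered_ordToZF hχ (hg2.trans hαr)
  obtain ⟨w, z, hw, hz, hze, hmem⟩ := wit_complete hg2 hg3 hg1
  have hwH : w ∈ Hset χ := Hset_trans hrH hw
  have hzH : z ∈ Hset χ := Hset_trans hwH hz
  obtain ⟨d, hd, hreal⟩ := elem_witness hel witFm
    ![⟨condCode αr fr, hr⟩, ⟨ordToZF 1, hone⟩, ⟨ordToZF β, hbN⟩]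
    ![⟨condCode αr fr, hrH⟩, ⟨ordToZF 1, honeH⟩, ⟨ordToZF β, hbH⟩]
    (fun i => by fin_cases i <;> rfl)
    ⟨ordToZF γ₀, hγ0H⟩
    (by
      rw [realize_witFm]
      refine ⟨⟨w, hwH⟩, ⟨z, hzH⟩, ?_, ?_, ?_, ?_⟩
      · simpa using hw
      · exact hz
      · simp only [Matrix.cons_val_one, Matrix.head_cons]
        exact (doub_abs hzH hγ0H honeH).2 hze
      · simpa using hmem)
  rw [realize_witFm] at hreal
  obtain ⟨w', z', hw', hz', hdoub, hmem'⟩ := hreal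
  simp only [Matrix.cons_val_zero, Matrix.cons_val_one, Matrix.head_cons] at hw' hdoub hmem'
  have hz'e := (doub_abs z'.2 hd honeH).1 hdoub
  obtain ⟨γ, hγe, hγ1, hγ2, hγ3⟩ := wit_sound hβ1 hw' hz' hz'e hmem'
  exact ⟨γ, by rw [← hγe]; exact d.2, hγ1, hγ2, hγ3⟩

theorem denseSet_in_N {Qc : ZFSet.{0}} (hQN : Qc ∈ N) (hone : ordToZF 1 ∈ N)
    {β : Ordinal.{0}} (hbN : ordToZF β ∈ N) :
    ∃ Dz : ZFSet.{0}, Dz ∈ N ∧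
      ∀ p : ZFSet.{0}, (p ∈ Dz ↔ (p ∈ Qc ∧
        ∃ c w z : ZFSet.{0}, w ∈ p ∧ z ∈ w ∧ z = ({c, ordToZF 1} : ZFSet) ∧
          ordToZF β ∈ c)) := by
  classical
  have hQH : Qc ∈ Hset χ := elemIn_sub hel hQN
  have honeH : ordToZF 1 ∈ Hset χ := elemIn_sub hel hone
  have hbH : ordToZF β ∈ Hset χ := elemIn_sub hel hbN
  set DH : ZFSet.{0} := ZFSet.sep (fun p =>
    ∃ c w z : ZFSet.{0}, w ∈ p ∧ z ∈ w ∧ z = ({c, ordToZF 1} : ZFSet) ∧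
      ordToZF β ∈ c) Qc with hDH
  have hDQ : ∀ y, y ∈ DH → y ∈ Qc := fun y hy => (ZFSet.mem_sep.1 hy).1
  have hDHH : DH ∈ Hset χ := by
    refine Hered.intro _ ?_ ?_
    · refine lt_of_le_of_lt (Cardinal.mk_le_mk_of_subset ?_) hQH.card_lt
      intro y hy
      exact hDQ y hy
    · exact fun y hy => hQH.mem (hDQ y hy)
  -- the equivalence between the real and the H-bounded membership criterion
  have conv : ∀ p : ZFSet.{0}, p ∈ Hset χ →
      ((∃ c w z : ZFSet.{0}, w ∈ p ∧ z ∈ w ∧ z = ({c, ordToZF 1} : ZFSet) ∧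
          ordToZF β ∈ c) ↔
        (∃ c w z : ↥(Hset χ), (w : ZFSet.{0}) ∈ p ∧ (z : ZFSet.{0}) ∈ (w : ZFSet.{0}) ∧
          (∀ t : ↥(Hset χ), ((t : ZFSet.{0}) ∈ (z : ZFSet.{0}) ↔
            ((t : ZFSet.{0}) = (c : ZFSet.{0}) ∨ (t : ZFSet.{0}) = ordToZF 1))) ∧
          ordToZF β ∈ (c : ZFSet.{0}))) := by
    intro p hp
    constructor
    · rintro ⟨c, w, z, hw, hz, hze, hm⟩
      have hwH : w ∈ Hset χ := Hset_trans hp hw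
      have hzH : z ∈ Hset χ := Hset_trans hwH hz
      have hcH : c ∈ Hset χ := Hset_trans hzH (by rw [hze]; exact ZFSet.mem_pair.2 (Or.inl rfl))
      exact ⟨⟨c, hcH⟩, ⟨w, hwH⟩, ⟨z, hzH⟩, hw, hz, (doub_abs hzH hcH honeH).2 hze, hm⟩
    · rintro ⟨c, w, z, hw, hz, hdoub, hm⟩
      exact ⟨c, w, z, hw, hz, (doub_abs z.2 c.2 honeH).1 hdoub, hm⟩
  obtain ⟨d, hd, hreal⟩ := elem_witness hel denseFm
    ![⟨Qc, hQN⟩, ⟨ordToZF 1, hone⟩, ⟨ordToZF β, hbN⟩]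
    ![⟨Qc, hQH⟩, ⟨ordToZF 1, honeH⟩, ⟨ordToZF β, hbH⟩]
    (fun i => by fin_cases i <;> rfl)
    ⟨DH, hDHH⟩
    (by
      rw [realize_denseFm]
      intro p
      simp only [Matrix.cons_val_zero, Matrix.cons_val_one, Matrix.head_cons]
      rw [hDH, ZFSet.mem_sep]
      exact and_congr_right fun _ => conv p p.2)
  rw [realize_denseFm] at hreal
  simp only [Matrix.cons_val_zero, Matrix.cons_val_one, Matrix.head_cons] at hreal
  refine ⟨d, d.2, ?_⟩
  intro p
  constructor
  · intro hp
    have hpH : p ∈ Hset χ := Hset_trans hd hp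
    have := (hreal ⟨p, hpH⟩).1 hp
    exact ⟨this.1, (conv p hpH).2 this.2⟩
  · rintro ⟨hpQ, hex⟩
    have hpH : p ∈ Hset χ := Hset_trans hQH hpQ
    exact (hreal ⟨p, hpH⟩).2 ⟨hpQ, (conv p hpH).1 hex⟩

end elemapps

theorem not_isLimit_add_one (μ : Ordinal.{0}) : ¬ Order.IsSuccLimit (μ + 1) := by
  intro h
  have := h.succ_lt (lt_add_one μ)
  rw [Ordinal.add_one_eq_succ] at this
  exact lt_irrefl _ this

theorem extend_cond (Cbar : Ordinal.{0} → Set Ordinal.{0})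
    (hCbar : ∀ δ, δ < omega1 → Order.IsSuccLimit δ → Cbar δ ⊆ Set.Iio δ)
    {p : ZFSet.{0}} (hp : IsCondZ Cbar p) {β : Ordinal.{0}} (hβ : β < omega1) :
    ∃ r : ZFSet.{0}, IsCondZ Cbar r ∧ p ⊆ r ∧
      ∃ μ, β < μ ∧ ZFSet.pair (ordToZF μ) (ordToZF 1) ∈ r := by
  obtain ⟨αp, fp, hα1, hα2, rfl, hclo, hcb⟩ := hp
  set μ : Ordinal.{0} := max β αp + 1 with hμ
  have hαμ : αp < μ := lt_of_le_of_lt (le_max_right β αp) (lt_add_one _)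
  have hβμ : β < μ := lt_of_le_of_lt (le_max_left β αp) (lt_add_one _)
  have hμω : μ < omega1 := add_one_lt_omega1 (max_lt hβ hα1)
  have hμ1ω : μ + 1 < omega1 := add_one_lt_omega1 hμω
  set g : Ordinal.{0} → Bool :=
    fun x => if x < αp then fp x else (if x = μ then true else false) with hg
  have hag : ∀ x, x < αp → g x = fp x := fun x hx => if_pos hx
  have hgμ : g μ = true := by
    simp [hg, not_lt.2 hαμ.le]
  have hgother : ∀ x, g x = true → x < αp ∨ x = μ := by
    intro x hx
    by_cases h1 : x < αp
    · exact Or.inl h1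
    · by_cases h2 : x = μ
      · exact Or.inr h2
      · exfalso
        simp only [hg, if_neg h1, if_neg h2] at hx
        exact Bool.false_ne_true hx
  refine ⟨condCode (μ + 1) g, ?_, ?_, μ, hβμ, mem_condCode_of_true (lt_add_one μ) hgμ⟩
  · refine ⟨μ + 1, g, hμ1ω, not_isLimit_add_one μ, rfl, ?_, ?_⟩
    · -- closure clause
      intro δ' hδ' hL hsupδ
      rcases lt_trichotomy δ' αp with hlt | heq | hgt
      · have hseteq : {x | x < δ' ∧ g x = true} = {x | x < δ' ∧ fp x = true} := by
          ext x
          simp only [Set.mem_setOf_eq]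
          exact and_congr_right fun hx => by rw [hag x (hx.trans hlt)]
        rw [hseteq] at hsupδ
        rw [hag δ' hlt]
        exact hclo δ' hlt hL hsupδ
      · exact absurd (heq ▸ hL) hα2
      · exfalso
        have hle : sSup {x | x < δ' ∧ g x = true} ≤ αp := by
          refine osSup_le ?_
          rintro x ⟨hx1, hx2⟩
          rcases hgother x hx2 with h | rfl
          · exact h.le
          · exfalso
            have : δ' ≤ μ := Order.lt_add_one_iff.1 hδ'
            exact absurd hx1 (not_lt.2 this)
        rw [hsupδ] at hle
        exact absurd hle (not_le.2 hgt)
    · -- Cbar clause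
      intro δ' hδ' hL
      have hδω : δ' < omega1 := hδ'.trans hμ1ω
      have hsubδ : Cbar δ' ⊆ Set.Iio δ' := hCbar δ' hδω hL
      rcases lt_trichotomy δ' αp with hlt | heq | hgt
      · have hseteq : {x | x ∈ Cbar δ' ∧ g x = true} = {x | x ∈ Cbar δ' ∧ fp x = true} := by
          ext x
          simp only [Set.mem_setOf_eq]
          exact and_congr_right fun hx => by rw [hag x ((hsubδ hx).trans hlt)]
        rw [hseteq]
        exact hcb δ' hlt hL
      · exact absurd (heq ▸ hL) hα2
      · have hle : sSup {x | x ∈ Cbar δ' ∧ g x = true} ≤ αp := by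
          refine osSup_le ?_
          rintro x ⟨hx1, hx2⟩
          rcases hgother x hx2 with h | rfl
          · exact h.le
          · exfalso
            have h1 : μ < δ' := hsubδ hx1
            have h2 : δ' ≤ μ := Order.lt_add_one_iff.1 hδ'
            exact absurd h1 (not_lt.2 h2)
        exact lt_of_le_of_lt hle hgt
  · -- p ⊆ r
    intro x hx
    rcases mem_condCode.1 hx with ⟨γ, hγ, rfl⟩
    refine mem_condCode.2 ⟨γ, hγ.trans (hαμ.trans (lt_add_one μ)), ?_⟩
    have := hag γ hγ
    rw [this]

/-- `Q^1_{\bar C}` is not `ω`-proper: if `⟨N_i : i ≤ ω⟩` is an increasing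
chain of countable elementary submodels of `(H(χ), ∈)` with
`Q^1_{\bar C} ∈ N_0`, `N_ω = ⋃_i N_i`, and the guessed set satisfies
`C_{N_ω ∩ ω₁} = {N_i ∩ ω₁ : i < ω}`, then no condition `q` with domain
`⊇ N_ω ∩ ω₁` whose `1`-set is unbounded in `N_ω ∩ ω₁` can be
`(N_i, Q)`-generic for infinitely many `i` and `(N_ω, Q)`-generic. -/

theorem stmt11 (Cbar : Ordinal.{0} → Set Ordinal.{0})
    (hCbar : ∀ δ, δ < omega1 → Order.IsSuccLimit δ →
      Cbar δ ⊆ Set.Iio δ ∧ (∀ β < δ, ∃ γ ∈ Cbar δ, β < γ) ∧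
      otp (Cbar δ) = Ordinal.omega0.{1})
    (χ : Cardinal.{1}) (hreg : χ.IsRegular) (hχ : Cardinal.aleph 1 < χ)
    (Nset : ℕ → Set ZFSet.{0})
    (helem : ∀ i, ElemIn (Nset i) (Hset χ))
    (hcnt : ∀ i, (Nset i).Countable)
    (hchain : ∀ i, ElemIn (Nset i) (Nset (i + 1)))
    (Qc : ZFSet.{0}) (hQc : Qc.toSet = {x | IsCondZ Cbar x})
    (hQN : Qc ∈ Nset 0)
    (hguess : Cbar (traceOrd (⋃ i, Nset i)) =
      Set.range fun i : ℕ => traceOrd (Nset i)) :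
    ¬ ∃ (α : Ordinal.{0}) (f : Ordinal.{0} → Bool),
        IsCondZ Cbar (condCode α f) ∧
        {i : ℕ | IsGenericFor Cbar (Nset i) (condCode α f)}.Infinite ∧
        IsGenericFor Cbar (⋃ i, Nset i) (condCode α f) ∧
        traceOrd (⋃ i, Nset i) ≤ α ∧
        sSup {β | β < traceOrd (⋃ i, Nset i) ∧ f β = true} =
          traceOrd (⋃ i, Nset i) := by
  rintro ⟨α, f, hcond, hinf, hgenω, hδα, hsup⟩
  have hCsub : ∀ δ, δ < omega1 → Order.IsSuccLimit δ → Cbar δ ⊆ Set.Iio δ :=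
    fun δ h1 h2 => (hCbar δ h1 h2).1
  set Nω := ⋃ i, Nset i with hNω
  set δ := traceOrd Nω with hδdef
  have hmono : ∀ i j : ℕ, i ≤ j → Nset i ⊆ Nset j := by
    intro i j hij
    induction j, hij using Nat.le_induction with
    | base => exact fun x h => h
    | succ n hn ih => exact fun x hx => elemIn_sub (hchain n) (ih hx)
  have hQNi : ∀ i, Qc ∈ Nset i := fun i => hmono 0 i (Nat.zero_le i) hQN
  have hzeroi : ∀ i, ordToZF 0 ∈ Nset i := fun i => zero_code_mem hχ (helem i)
  have honei : ∀ i, ordToZF 1 ∈ Nset i := by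
    intro i
    have := succ_code_mem hχ (helem i) omega1_isLimit.pos (hzeroi i)
    rwa [zero_add] at this
  have hSz : ∀ i, (0 : Ordinal.{0}) ∈ Sset (Nset i) :=
    fun i => ⟨omega1_isLimit.pos, hzeroi i⟩
  have hSsucc : ∀ i, ∀ a ∈ Sset (Nset i), a + 1 ∈ Sset (Nset i) :=
    fun i a ha => ⟨add_one_lt_omega1 ha.1, succ_code_mem hχ (helem i) ha.1 ha.2⟩
  have htlim : ∀ i, Order.IsSuccLimit (traceOrd (Nset i)) := fun i =>
    isLimit_osSup ⟨0, hSz i⟩ (bddAbove_Sset _) (hSsucc i)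
  have htmono : ∀ i j : ℕ, i ≤ j → traceOrd (Nset i) ≤ traceOrd (Nset j) :=
    fun i j h => traceOrd_mono (hmono i j h)
  have htδ : ∀ i, traceOrd (Nset i) ≤ δ :=
    fun i => traceOrd_mono (Set.subset_iUnion Nset i)
  have hδlim : Order.IsSuccLimit δ := by
    refine isLimit_osSup ⟨0, ⟨omega1_isLimit.pos, Set.mem_iUnion.2 ⟨0, hzeroi 0⟩⟩⟩
      (bddAbove_Sset _) ?_
    rintro a ⟨ha1, ha2⟩
    rcases Set.mem_iUnion.1 ha2 with ⟨i, hi⟩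
    exact ⟨add_one_lt_omega1 ha1,
      Set.mem_iUnion.2 ⟨i, succ_code_mem hχ (helem i) ha1 hi⟩⟩
  obtain ⟨α₀, f₀, hα₀ω, hα₀nl, heq, hclo₀, hcb₀⟩ := id hcond
  obtain ⟨he, hagree⟩ := condCode_inj heq
  subst he
  have hclo : ∀ δ' < α, Order.IsSuccLimit δ' →
      sSup {x | x < δ' ∧ f x = true} = δ' → f δ' = true := by
    intro δ' h1 h2 h3
    have hseteq : {x | x < δ' ∧ f x = true} = {x | x < δ' ∧ f₀ x = true} := by
      ext x
      simp only [Set.mem_setOf_eq]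
      exact and_congr_right fun hx => by rw [hagree x (hx.trans h1)]
    rw [hagree δ' h1]
    exact hclo₀ δ' h1 h2 (by rw [← hseteq]; exact h3)
  have hcb : ∀ δ' < α, Order.IsSuccLimit δ' →
      sSup {x | x ∈ Cbar δ' ∧ f x = true} < δ' := by
    intro δ' h1 h2
    have hsubδ := hCsub δ' (h1.trans hα₀ω) h2
    have hseteq : {x | x ∈ Cbar δ' ∧ f x = true} = {x | x ∈ Cbar δ' ∧ f₀ x = true} := by
      ext x
      simp only [Set.mem_setOf_eq]
      exact and_congr_right fun hx => by rw [hagree x ((hsubδ hx).trans h1)]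
    rw [hseteq]
    exact hcb₀ δ' h1 h2
  have hδα' : δ < α := lt_of_le_of_ne hδα (fun h => hα₀nl (h ▸ hδlim))
  -- the key per-model fact
  have key : ∀ i, IsGenericFor Cbar (Nset i) (condCode α f) →
      f (traceOrd (Nset i)) = true := by
    intro i hgen
    set t := traceOrd (Nset i) with ht
    have htα : t < α := lt_of_le_of_lt (htδ i) hδα'
    have hclaim : ∀ β, β < t → ∃ γ, β < γ ∧ γ < t ∧ f γ = true := by
      intro β hβt
      obtain ⟨β₀, hβ₀S, hββ₀⟩ :=
        exists_gt_of_lt_osSup (show β < sSup (Sset (Nset i)) from hβt)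
      have hβ'S : β₀ + 1 ∈ Sset (Nset i) := hSsucc i β₀ hβ₀S
      have hβ'1 : (1 : Ordinal.{0}) ≤ β₀ + 1 := by
        calc (1 : Ordinal.{0}) = 0 + 1 := (zero_add 1).symm
          _ ≤ β₀ + 1 := add_le_add_left (zero_le (a := β₀)) 1
      have hββ' : β < β₀ + 1 := hββ₀.trans (lt_add_one β₀)
      obtain ⟨Dz, hDzN, hDchar⟩ :=
        denseSet_in_N hχ (helem i) (hQNi i) (honei i) hβ'S.2
      have hDcond : ∀ x ∈ Dz.toSet, IsCondZ Cbar x := by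
        intro x hx
        have hxQ : x ∈ Qc := ((hDchar x).1 ((ZFSet.mem_toSet _ _).1 hx)).1
        have h2 : x ∈ Qc.toSet := (ZFSet.mem_toSet _ _).2 hxQ
        rw [hQc] at h2
        exact h2
      have hDdense : ∀ p, IsCondZ Cbar p → ∃ r ∈ Dz.toSet, p ⊆ r := by
        intro p hpc
        obtain ⟨r, hrc, hpr, μ, hβ'μ, hpair⟩ := extend_cond Cbar hCsub hpc hβ'S.1
        refine ⟨r, ?_, hpr⟩
        have hrQ : r ∈ Qc := by
          have h2 : r ∈ Qc.toSet := by rw [hQc]; exact hrc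
          exact (ZFSet.mem_toSet _ _).1 h2
        exact (ZFSet.mem_toSet _ _).2 ((hDchar r).2 ⟨hrQ, ordToZF μ, _, _, hpair,
          mem_zfpair_iff.2 (Or.inr rfl), rfl, ordToZF_mem hβ'μ⟩)
      have hDopen : ∀ p r, r ∈ Dz.toSet → IsCondZ Cbar p → r ⊆ p → p ∈ Dz.toSet := by
        intro p r hr hpc hrp
        obtain ⟨hrQ, c, w, z, hw, hz, hze, hm⟩ := (hDchar r).1 ((ZFSet.mem_toSet _ _).1 hr)
        have hpQ : p ∈ Qc := by
          have h2 : p ∈ Qc.toSet := by rw [hQc]; exact hpc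
          exact (ZFSet.mem_toSet _ _).1 h2
        exact (ZFSet.mem_toSet _ _).2 ((hDchar p).2 ⟨hpQ, c, w, z, hrp hw, hz, hze, hm⟩)
      obtain ⟨r, hrDN, s, hscond, hqs, hrs⟩ :=
        hgen Dz hDzN hDcond hDdense hDopen (condCode α f) hcond (fun x hx => hx)
      obtain ⟨hrD, hrN⟩ := hrDN
      obtain ⟨hrQ, c, w, z, hw, hz, hze, hm⟩ := (hDchar r).1 ((ZFSet.mem_toSet _ _).1 hrD)
      have hrc : IsCondZ Cbar r := by
        have h2 : r ∈ Qc.toSet := (ZFSet.mem_toSet _ _).2 hrQ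
        rw [hQc] at h2
        exact h2
      obtain ⟨αr, fr, hαrω, hαrnl, hre, hrclo, hrcb⟩ := hrc
      subst hre
      obtain ⟨γ₀, hcγ₀, hγ₀1, hγ₀2, hγ₀3⟩ := wit_sound hβ'1 hw hz hze hm
      obtain ⟨γ, hγN, hγ1, hγ2, hγ3⟩ := wit_in_N hχ (helem i) hαrω hrN (honei i)
        hβ'1 hβ'S.2 hγ₀1 hγ₀2 hγ₀3
      have hγS : γ ∈ Sset (Nset i) := ⟨hγ2.trans hαrω, hγN⟩
      have hγt : γ < t :=
        lt_of_lt_of_le (lt_add_one γ) (le_csSup (bddAbove_Sset _) (hSsucc i γ hγS))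
      obtain ⟨αs, fs, hαsω, hαsnl, hse, hsclo, hscb⟩ := hscond
      rw [hse] at hqs hrs
      have h1 := condCode_subset hqs
      have h2 := pair_true_mem_condCode (hrs (mem_condCode_of_true hγ2 hγ3))
      have hγα : γ < α := hγt.trans_le (le_of_lt htα)
      have hfγ : f γ = true := by rw [h1.2 γ hγα]; exact h2.2
      exact ⟨γ, hββ'.trans hγ1, hγt, hfγ⟩
    have hsupt : sSup {x | x < t ∧ f x = true} = t := by
      apply le_antisymm
      · exact osSup_le fun x hx => hx.1.le
      · by_contra hlt
        push_neg at hlt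
        obtain ⟨γ, h1, h2, h3⟩ := hclaim _ hlt
        have hle : γ ≤ sSup {x | x < t ∧ f x = true} :=
          le_csSup ⟨t, fun x hx => hx.1.le⟩ ⟨h2, h3⟩
        exact absurd (h1.trans_le hle) (lt_irrefl _)
    exact hclo t htα (htlim i) hsupt
  -- final contradiction
  have hK := hcb δ hδα' hδlim
  have hKbdd : BddAbove {x | x ∈ Cbar δ ∧ f x = true} :=
    ⟨δ, fun x hx => ((hCsub δ (hδα'.trans hα₀ω) hδlim) hx.1).le⟩
  have hge : δ ≤ sSup {x | x ∈ Cbar δ ∧ f x = true} := by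
    by_contra hlt
    push_neg at hlt
    obtain ⟨a, haS, hsa⟩ :=
      exists_gt_of_lt_osSup (show sSup {x | x ∈ Cbar δ ∧ f x = true} < sSup (Sset Nω) from hlt)
    obtain ⟨a1, ha1⟩ := Set.mem_iUnion.1 haS.2
    obtain ⟨i, hiI, hji⟩ := hinf.exists_gt a1
    have hfi : f (traceOrd (Nset i)) = true := key i hiI
    have hti : traceOrd (Nset i) ∈ Cbar δ := by
      rw [hguess]
      exact ⟨i, rfl⟩
    have hle : traceOrd (Nset i) ≤ sSup {x | x ∈ Cbar δ ∧ f x = true} :=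
      le_csSup hKbdd ⟨hti, hfi⟩
    have haj : a ≤ traceOrd (Nset a1) := le_csSup (bddAbove_Sset _) ⟨haS.1, ha1⟩
    have : sSup {x | x ∈ Cbar δ ∧ f x = true} < sSup {x | x ∈ Cbar δ ∧ f x = true} :=
      lt_of_lt_of_le (lt_of_lt_of_le hsa ((haj.trans (htmono a1 i hji.le)).trans hle)) (le_refl _)
    exact lt_irrefl _ this
  exact absurd (lt_of_le_of_lt hge hK) (lt_irrefl δ)
end
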